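/- Let X_1, …, X_d be i.i.d. ℕ-valued random variables with P(X_i > n) = p(n) for a non-increasing p : ℕ → [0,1], p(0) = 1, and suppose E[X_1] < ∞. Let κ = min{ n ∈ ℕ : p(n) < 1/d }. Then E[max(X_1,…,X_d)] ≥ κ(1 - 1/e) and E[max(X_1,…,X_d)] ≤ κ + 2d Σ_{n=κ}^∞ p(n). -/

import Mathlib

open MeasureTheory

theorem stmt8 {Ω : Type*} [MeasureSpace Ω] [IsProbabilityMeasure (volume : Measure Ω)]
    (d : ℕ) (hd : 1 ≤ d) (X : Fin d → Ω → ℕ) (hXmeas : ∀ i, Measurable (X i))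
    (hindep : ProbabilityTheory.iIndepFun X volume)
    (p : ℕ → ℝ) (hanti : Antitone p) (hp0 : p 0 = 1)
    (hdist : ∀ i n, (volume {ω | n < X i ω}).toReal = p n)
    (hpsum : Summable p)
    (κ : ℕ) (hκ : κ = sInf {n : ℕ | p n < 1 / d}) :
    (κ : ℝ) * (1 - (Real.exp 1)⁻¹) ≤
        (∑' t : ℕ, (volume {ω | t < Finset.univ.sup fun i => X i ω}).toReal) ∧
      (∑' t : ℕ, (volume {ω | t < Finset.univ.sup fun i => X i ω}).toReal) ≤
        (κ : ℝ) + 2 * d * ∑' n : ℕ, p (n + κ) := by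
  have hdpos : (0:ℝ) < d := by exact_mod_cast hd
  have hpnonneg : ∀ n, 0 ≤ p n := fun n => by
    rw [← hdist ⟨0, hd⟩ n]; exact ENNReal.toReal_nonneg
  have hple1 : ∀ n, p n ≤ 1 := fun n => hp0 ▸ hanti (Nat.zero_le n)
  -- key identity
  have key : ∀ t : ℕ, (volume {ω | t < Finset.univ.sup fun i => X i ω}).toReal
      = 1 - (1 - p t)^d := by
    intro t
    have hcompl : {ω | t < Finset.univ.sup fun i => X i ω}ᶜ
        = ⋂ i, {ω | X i ω ≤ t} := by
      ext ω; simp [Finset.sup_le_iff, not_lt]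
    have hmeas_i : ∀ i : Fin d, MeasurableSet {ω | X i ω ≤ t} := fun i =>
      (hXmeas i) (measurableSet_Iic : MeasurableSet (Set.Iic t))
    have hint : volume (⋂ i, {ω | X i ω ≤ t})
        = ∏ i : Fin d, volume {ω | X i ω ≤ t} :=
      hindep.meas_iInter (fun i => ⟨Set.Iic t, measurableSet_Iic, rfl⟩)
    have h2 : ∀ i : Fin d, (volume {ω | X i ω ≤ t}).toReal = 1 - p t := by
      intro i
      have he : {ω | X i ω ≤ t} = {ω | t < X i ω}ᶜ := by
        ext ω; simp [not_lt]
      have hm : MeasurableSet {ω | t < X i ω} :=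
        (hXmeas i) (measurableSet_Ioi : MeasurableSet (Set.Ioi t))
      rw [he, prob_compl_eq_one_sub hm,
        ENNReal.toReal_sub_of_le prob_le_one ENNReal.one_ne_top,
        ENNReal.toReal_one, hdist]
    have hset : {ω | t < Finset.univ.sup fun i => X i ω}
        = (⋂ i, {ω | X i ω ≤ t})ᶜ := by
      rw [← hcompl, compl_compl]
    rw [hset, prob_compl_eq_one_sub (MeasurableSet.iInter hmeas_i),
      ENNReal.toReal_sub_of_le prob_le_one ENNReal.one_ne_top,
      ENNReal.toReal_one, hint, ENNReal.toReal_prod]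
    simp_rw [h2]
    rw [Finset.prod_const, Finset.card_univ, Fintype.card_fin]
  set f : ℕ → ℝ := fun t => 1 - (1 - p t)^d with hf
  have hfnonneg : ∀ t, 0 ≤ f t := by
    intro t
    have : (1 - p t)^d ≤ 1 :=
      pow_le_one₀ (by linarith [hple1 t]) (by linarith [hpnonneg t])
    simp only [hf]; linarith
  have hfle : ∀ t, f t ≤ d * p t := by
    intro t
    have := one_add_mul_le_pow (a := -p t) (by linarith [hple1 t]) d
    simp only [hf]
    have h1pt : (1:ℝ) + -p t = 1 - p t := by ring
    rw [h1pt] at this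
    nlinarith
  have hfsum : Summable f :=
    Summable.of_nonneg_of_le hfnonneg hfle (hpsum.mul_left _)
  have hstsum : ∀ t, (volume {ω | t < Finset.univ.sup fun i => X i ω}).toReal = f t :=
    key
  simp_rw [hstsum]
  -- S nonempty
  have hSne : {n : ℕ | p n < 1 / d}.Nonempty := by
    have h0 : Filter.Tendsto p Filter.atTop (nhds 0) := hpsum.tendsto_atTop_zero
    have : ∀ᶠ n in Filter.atTop, p n < 1 / d :=
      h0.eventually_lt_const (by positivity)
    exact this.exists
  have hκmem : p κ < 1 / d := by rw [hκ]; exact Nat.sInf_mem hSne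
  have hbelow : ∀ t, t < κ → 1 / (d:ℝ) ≤ p t := by
    intro t ht
    by_contra h
    push_neg at h
    exact absurd (hκ ▸ Nat.sInf_le h) (Nat.not_le.mpr ht)
  constructor
  · -- lower bound
    have hterm : ∀ t < κ, (1 - (Real.exp 1)⁻¹) ≤ f t := by
      intro t ht
      have h1 : 1 - p t ≤ 1 - 1 / d := by linarith [hbelow t ht]
      have h2 : (0:ℝ) ≤ 1 - p t := by linarith [hple1 t]
      have h3 : (1 - p t)^d ≤ (1 - 1/d)^d := pow_le_pow_left₀ h2 h1 d
      have h4 : (1 - 1/(d:ℝ)) ≤ Real.exp (-(1/d)) := by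
        have := Real.add_one_le_exp (-(1/(d:ℝ)))
        linarith
      have h5 : ((1:ℝ) - 1/d)^d ≤ (Real.exp (-(1/d)))^d := by
        apply pow_le_pow_left₀ _ h4
        have : 1/(d:ℝ) ≤ 1 := by
          rw [div_le_one hdpos]; exact_mod_cast hd
        linarith
      have h6 : (Real.exp (-(1/(d:ℝ))))^d = (Real.exp 1)⁻¹ := by
        rw [← Real.exp_nat_mul, ← Real.exp_neg]
        congr 1
        field_simp
      simp only [hf]
      rw [h6] at h5
      linarith
    calc (κ:ℝ) * (1 - (Real.exp 1)⁻¹)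
        = ∑ t ∈ Finset.range κ, (1 - (Real.exp 1)⁻¹) := by
          rw [Finset.sum_const, Finset.card_range, nsmul_eq_mul]
      _ ≤ ∑ t ∈ Finset.range κ, f t :=
          Finset.sum_le_sum fun t ht => hterm t (Finset.mem_range.mp ht)
      _ ≤ ∑' t, f t := Summable.sum_le_tsum _ (fun t _ => hfnonneg t) hfsum
  · -- upper bound
    have hsplit : ∑' t, f t = (∑ t ∈ Finset.range κ, f t) + ∑' n, f (n + κ) :=
      (Summable.sum_add_tsum_nat_add κ hfsum).symm
    have h1 : ∑ t ∈ Finset.range κ, f t ≤ κ := by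
      calc ∑ t ∈ Finset.range κ, f t ≤ ∑ t ∈ Finset.range κ, 1 := by
            apply Finset.sum_le_sum
            intro t _
            simp only [hf]
            have : (0:ℝ) ≤ (1 - p t)^d := pow_nonneg (by linarith [hple1 t]) d
            linarith
        _ = κ := by simp
    have hpsum' : Summable (fun n => p (n + κ)) := by
      exact (summable_nat_add_iff κ).mpr hpsum
    have h2 : ∑' n, f (n + κ) ≤ ∑' n, (d:ℝ) * p (n + κ) := by
      apply Summable.tsum_le_tsum (fun n => hfle (n + κ)) ((summable_nat_add_iff κ).mpr hfsum)
        (hpsum'.mul_left _)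
    have h3 : ∑' n, (d:ℝ) * p (n + κ) = d * ∑' n, p (n + κ) := tsum_mul_left
    have h4 : (0:ℝ) ≤ ∑' n, p (n + κ) := tsum_nonneg fun n => hpnonneg _
    rw [hsplit]
    nlinarith
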